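/- Let s, γ, C_b, C_v, C_c > 0 be real constants and let h_ℓ = 2^{−ℓ} for ℓ ∈ ℕ. Then there exists a constant C > 0 such that for every ε ∈ (0, e^{−1}) there exist L ∈ ℕ and positive integers N_0, …, N_L with C_b · h_L^{4s} + Σ_{ℓ=0}^L C_v · h_ℓ^{4s} / N_ℓ ≤ ε², and with total cost Σ_{ℓ=0}^L N_ℓ · C_c · h_ℓ^{−γ} bounded by: C · ε^{−2} if 4s > γ; C · ε^{−2} (log ε)² if 4s = γ; and C · ε^{−γ/(2s)} if 4s < γ. (This is the abstract multilevel Monte Carlo complexity theorem for the ratio estimator: a mean square error consisting of a squared bias term C_b h_L^{4s} plus the multilevel variance Σ_ℓ C_v h_ℓ^{4s}/N_ℓ can be made at most ε² at the stated cost.) -/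

import Mathlib

open Real Finset

private lemma sum_rpow_neg_le' {c : ℝ} (hc : 0 < c) (n : ℕ) :
    ∑ ℓ ∈ Finset.range n, (2:ℝ) ^ (-(ℓ:ℝ)*c) ≤ (1 - (2:ℝ)^(-c))⁻¹ := by
  have h0 : (0:ℝ) ≤ (2:ℝ)^(-c) := Real.rpow_nonneg (by norm_num) _
  have h1 : (2:ℝ)^(-c) < 1 :=
    Real.rpow_lt_one_of_one_lt_of_neg one_lt_two (neg_neg_iff_pos.mpr hc)
  have key : ∀ ℓ : ℕ, (2:ℝ) ^ (-(ℓ:ℝ)*c) = ((2:ℝ)^(-c))^ℓ := by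
    intro ℓ
    rw [← Real.rpow_natCast ((2:ℝ)^(-c)) ℓ, ← Real.rpow_mul (by norm_num)]
    ring_nf
  calc ∑ ℓ ∈ Finset.range n, (2:ℝ) ^ (-(ℓ:ℝ)*c)
      = ∑ ℓ ∈ Finset.range n, ((2:ℝ)^(-c))^ℓ := by simp_rw [key]
    _ ≤ (1 - (2:ℝ)^(-c))⁻¹ := by
        have := tsum_geometric_of_lt_one h0 h1
        exact this ▸ Summable.sum_le_tsum _ (fun i _ => pow_nonneg h0 i)
          (summable_geometric_of_lt_one h0 h1)

private lemma sum_rpow_le' {c : ℝ} (hc : 0 < c) (L : ℕ) :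
    ∑ ℓ ∈ Finset.range (L+1), (2:ℝ) ^ ((ℓ:ℝ)*c)
      ≤ (2:ℝ)^((L:ℝ)*c) * (1 - (2:ℝ)^(-c))⁻¹ := by
  have key : ∀ ℓ ∈ Finset.range (L+1),
      (2:ℝ) ^ ((ℓ:ℝ)*c) = (2:ℝ)^((L:ℝ)*c) * (2:ℝ)^(-((L-ℓ:ℕ):ℝ)*c) := by
    intro ℓ hℓ
    rw [← Real.rpow_add (by norm_num)]
    congr 1
    have hle : ℓ ≤ L := Nat.lt_succ_iff.mp (Finset.mem_range.mp hℓ)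
    rw [Nat.cast_sub hle]; ring
  rw [Finset.sum_congr rfl key, ← Finset.mul_sum]
  apply mul_le_mul_of_nonneg_left _ (Real.rpow_nonneg (by norm_num) _)
  calc ∑ ℓ ∈ Finset.range (L+1), (2:ℝ)^(-((L-ℓ:ℕ):ℝ)*c)
      = ∑ j ∈ Finset.range (L+1), (2:ℝ)^(-(j:ℝ)*c) := by
        rw [← Finset.sum_range_reflect (fun j => (2:ℝ)^(-(j:ℝ)*c)) (L+1)]
        simp
    _ ≤ _ := sum_rpow_neg_le' hc (L+1)

private noncomputable def mlL (a Cb ε : ℝ) : ℕ :=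
  ⌈(Real.log (2*Cb) + 2 * Real.log (1/ε)) / (a * Real.log 2)⌉₊

section mlLfacts
variable {a Cb ε : ℝ} (ha : 0 < a) (hCb : 0 < Cb) (hε : 0 < ε)

private lemma mlL_t_eq (ha : 0 < a) (hCb : 0 < Cb) (hε : 0 < ε) :
    (2:ℝ) ^ (((Real.log (2*Cb) + 2 * Real.log (1/ε)) / (a * Real.log 2)) * a)
      = 2 * Cb * ε ^ (-2:ℝ) := by
  set t := (Real.log (2*Cb) + 2 * Real.log (1/ε)) / (a * Real.log 2) with htdef
  have hlog2 : (0:ℝ) < Real.log 2 := Real.log_pos one_lt_two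
  have ht : t * (a * Real.log 2) = Real.log (2*Cb) + 2 * Real.log (1/ε) :=
    div_mul_cancel₀ _ (by positivity)
  have h1 : Real.log (1/ε) = - Real.log ε := by rw [one_div, Real.log_inv]
  rw [Real.rpow_def_of_pos (by norm_num : (0:ℝ) < 2),
      Real.rpow_def_of_pos hε]
  rw [show Real.log 2 * (t * a) = t * (a * Real.log 2) by ring, ht, h1]
  rw [Real.exp_add, Real.exp_log (by positivity)]
  ring_nf

private lemma mlL_bias (ha : 0 < a) (hCb : 0 < Cb) (hε : 0 < ε) :
    Cb * (2:ℝ) ^ (-((mlL a Cb ε : ℝ)) * a) ≤ ε^2 / 2 := by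
  set t := (Real.log (2*Cb) + 2 * Real.log (1/ε)) / (a * Real.log 2) with htdef
  have hle : t ≤ (mlL a Cb ε : ℝ) := Nat.le_ceil t
  have h2 : (2:ℝ) ^ (-((mlL a Cb ε : ℝ)) * a) ≤ (2:ℝ) ^ (-t * a) := by
    apply Real.rpow_le_rpow_of_exponent_le one_le_two
    nlinarith
  have h3 : (2:ℝ) ^ (-t*a) = (ε^2) / (2*Cb) := by
    have := mlL_t_eq ha hCb hε
    rw [← htdef] at this
    have hpos : (0:ℝ) < (2:ℝ) ^ (t*a) := Real.rpow_pos_of_pos (by norm_num) _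
    rw [show -t*a = -(t*a) by ring, Real.rpow_neg (by norm_num : (0:ℝ) ≤ 2), this]
    rw [Real.rpow_neg hε.le, show ((2:ℝ)) = ((2:ℕ):ℝ) by norm_num,
      Real.rpow_natCast]
    field_simp
  calc Cb * (2:ℝ) ^ (-((mlL a Cb ε : ℝ)) * a)
      ≤ Cb * (2:ℝ) ^ (-t * a) := by nlinarith [hCb]
    _ = ε^2/2 := by rw [h3]; field_simp

private lemma mlL_pow_le (ha : 0 < a) (hCb : 0 < Cb) (hε : 0 < ε) (hε1 : ε ≤ 1) :
    (2:ℝ) ^ ((mlL a Cb ε : ℝ) * a) ≤ ((2:ℝ)^a * (2*Cb+1)) * ε ^ (-2:ℝ) := by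
  set t := (Real.log (2*Cb) + 2 * Real.log (1/ε)) / (a * Real.log 2) with htdef
  have hεinv : (1:ℝ) ≤ ε ^ (-2:ℝ) :=
    Real.one_le_rpow_of_pos_of_le_one_of_nonpos hε hε1 (by norm_num)
  have h2a : (1:ℝ) ≤ (2:ℝ)^a := Real.one_le_rpow one_le_two ha.le
  by_cases hts : t ≤ 0
  · have : mlL a Cb ε = 0 := Nat.ceil_eq_zero.mpr hts
    rw [this]
    simp only [Nat.cast_zero, zero_mul, Real.rpow_zero]
    have hA : (1:ℝ) ≤ (2:ℝ)^a * (2*Cb+1) := by nlinarith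
    calc (1:ℝ) ≤ ε ^ (-2:ℝ) := hεinv
      _ ≤ (2:ℝ)^a * (2*Cb+1) * ε ^ (-2:ℝ) :=
          le_mul_of_one_le_left (le_trans zero_le_one hεinv) hA
  · push_neg at hts
    have hceil : (mlL a Cb ε : ℝ) < t + 1 := Nat.ceil_lt_add_one hts.le
    have h2 : (2:ℝ) ^ ((mlL a Cb ε : ℝ) * a) ≤ (2:ℝ) ^ ((t+1) * a) := by
      apply Real.rpow_le_rpow_of_exponent_le one_le_two
      nlinarith
    have h3 : (2:ℝ) ^ ((t+1)*a) = (2:ℝ)^a * (2*Cb) * ε ^ (-2:ℝ) := by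
      rw [show (t+1)*a = t*a + a by ring, Real.rpow_add (by norm_num : (0:ℝ) < 2),
        htdef, mlL_t_eq ha hCb hε]
      ring
    have hεi : (0:ℝ) ≤ ε ^ (-2:ℝ) := le_trans zero_le_one hεinv
    calc (2:ℝ) ^ ((mlL a Cb ε : ℝ) * a) ≤ (2:ℝ) ^ ((t+1) * a) := h2
      _ = (2:ℝ)^a * (2*Cb) * ε ^ (-2:ℝ) := h3
      _ ≤ (2:ℝ)^a * (2*Cb+1) * ε ^ (-2:ℝ) := by nlinarith

end mlLfacts

private lemma mlL_add_one_le {a Cb ε : ℝ} (ha : 0 < a) (hCb : 0 < Cb) (hε : 0 < ε)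
    (hεe : ε < Real.exp (-1)) :
    (mlL a Cb ε : ℝ) + 1
      ≤ ((|Real.log (2*Cb)| + 2) / (a * Real.log 2) + 2) * (-Real.log ε) := by
  have hlog2 : (0:ℝ) < Real.log 2 := Real.log_pos one_lt_two
  have hl : 1 < -Real.log ε := by
    have := Real.log_lt_log hε hεe
    rw [Real.log_exp] at this; linarith
  set c1 := (|Real.log (2*Cb)| + 2) / (a * Real.log 2) with hc1
  have hc1n : 0 ≤ c1 := by positivity
  set t := (Real.log (2*Cb) + 2 * Real.log (1/ε)) / (a * Real.log 2) with htdef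
  have hnum : Real.log (2*Cb) + 2 * Real.log (1/ε)
      ≤ (|Real.log (2*Cb)| + 2) * (-Real.log ε) := by
    have h1 : Real.log (1/ε) = -Real.log ε := by rw [one_div, Real.log_inv]
    have h2 := le_abs_self (Real.log (2*Cb))
    have h3 := abs_nonneg (Real.log (2*Cb))
    nlinarith
  have hts : t ≤ c1 * (-Real.log ε) := by
    rw [htdef, hc1, div_mul_eq_mul_div]
    gcongr
  by_cases h : t ≤ 0
  · have h0 : mlL a Cb ε = 0 := Nat.ceil_eq_zero.mpr h
    rw [h0]; push_cast; nlinarith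
  · push_neg at h
    have hceil : (mlL a Cb ε : ℝ) < t + 1 := Nat.ceil_lt_add_one h.le
    nlinarith

private lemma mlL_rpow_le {a Cb ε : ℝ} (ha : 0 < a) (hCb : 0 < Cb) (hε : 0 < ε)
    (hε1 : ε ≤ 1) {c : ℝ} (hc : 0 ≤ c) :
    (2:ℝ) ^ ((mlL a Cb ε : ℝ) * c)
      ≤ ((2:ℝ)^a * (2*Cb+1)) ^ (c/a) * ε ^ (-(2*c/a)) := by
  have hD : (0:ℝ) < (2:ℝ)^a * (2*Cb+1) := by positivity
  have h1 : (2:ℝ) ^ ((mlL a Cb ε : ℝ) * c)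
      = ((2:ℝ) ^ ((mlL a Cb ε : ℝ) * a)) ^ (c/a) := by
    rw [← Real.rpow_mul (by norm_num : (0:ℝ) ≤ 2)]
    congr 1; field_simp
  rw [h1]
  calc ((2:ℝ) ^ ((mlL a Cb ε : ℝ) * a)) ^ (c/a)
      ≤ ((2:ℝ)^a * (2*Cb+1) * ε ^ (-2:ℝ)) ^ (c/a) := by
        apply Real.rpow_le_rpow (Real.rpow_nonneg (by norm_num) _)
          (mlL_pow_le ha hCb hε hε1) (by positivity)
    _ = ((2:ℝ)^a * (2*Cb+1)) ^ (c/a) * (ε ^ (-2:ℝ)) ^ (c/a) :=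
        Real.mul_rpow hD.le (Real.rpow_nonneg hε.le _)
    _ = ((2:ℝ)^a * (2*Cb+1)) ^ (c/a) * ε ^ (-(2*c/a)) := by
        rw [← Real.rpow_mul hε.le]; ring_nf

set_option maxHeartbeats 2000000 in
theorem statement17 (s γ Cb Cv Cc : ℝ)
    (hs : 0 < s) (hγ : 0 < γ) (hCb : 0 < Cb) (hCv : 0 < Cv) (hCc : 0 < Cc) :
    ∃ C : ℝ, 0 < C ∧ ∀ ε : ℝ, 0 < ε → ε < Real.exp (-1) →
      ∃ (L : ℕ) (N : ℕ → ℕ), (∀ ℓ ≤ L, 0 < N ℓ) ∧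
        Cb * ((2 : ℝ) ^ (-(L : ℝ))) ^ (4 * s)
            + ∑ ℓ ∈ Finset.range (L + 1),
                Cv * ((2 : ℝ) ^ (-(ℓ : ℝ))) ^ (4 * s) / N ℓ
          ≤ ε ^ 2 ∧
        (γ < 4 * s →
          ∑ ℓ ∈ Finset.range (L + 1),
              (N ℓ : ℝ) * Cc * ((2 : ℝ) ^ (-(ℓ : ℝ))) ^ (-γ)
            ≤ C * ε ^ (-2 : ℝ)) ∧
        (4 * s = γ →
          ∑ ℓ ∈ Finset.range (L + 1),
              (N ℓ : ℝ) * Cc * ((2 : ℝ) ^ (-(ℓ : ℝ))) ^ (-γ)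
            ≤ C * ε ^ (-2 : ℝ) * Real.log ε ^ 2) ∧
        (4 * s < γ →
          ∑ ℓ ∈ Finset.range (L + 1),
              (N ℓ : ℝ) * Cc * ((2 : ℝ) ^ (-(ℓ : ℝ))) ^ (-γ)
            ≤ C * ε ^ (-(γ / (2 * s)))) := by
  set a := 4 * s with hadef
  have ha : 0 < a := by rw [hadef]; linarith
  have hgconv : ∀ ℓ : ℕ, ((2:ℝ) ^ (-(ℓ:ℝ))) ^ a = (2:ℝ) ^ (-(ℓ:ℝ) * a) := by
    intro ℓ; rw [← Real.rpow_mul (by norm_num : (0:ℝ) ≤ 2)]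
  have hcconv : ∀ ℓ : ℕ, ((2:ℝ) ^ (-(ℓ:ℝ))) ^ (-γ) = (2:ℝ) ^ ((ℓ:ℝ) * γ) := by
    intro ℓ; rw [← Real.rpow_mul (by norm_num : (0:ℝ) ≤ 2)]; ring_nf
  set D := (2:ℝ)^a * (2*Cb+1) with hDdef
  have hD : 0 < D := by positivity
  have hεfacts : ∀ ε : ℝ, 0 < ε → ε < Real.exp (-1) → ε ≤ 1 := by
    intro ε hε hεe
    have h1 : Real.exp (-1) < 1 := by
      rw [Real.exp_lt_one_iff]; norm_num
    linarith
  rcases lt_trichotomy γ a with hcase | hcase | hcase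
  · -- γ < a = 4s : cost C ε^{-2}
    set b := (a - γ)/2 with hbdef
    have hb : 0 < b := by rw [hbdef]; linarith
    have hgb : (0:ℝ) < 1 - (2:ℝ)^(-b) := by
      have : (2:ℝ)^(-b) < 1 :=
        Real.rpow_lt_one_of_one_lt_of_neg one_lt_two (by linarith)
      linarith
    have hgγ : (0:ℝ) < 1 - (2:ℝ)^(-γ) := by
      have : (2:ℝ)^(-γ) < 1 :=
        Real.rpow_lt_one_of_one_lt_of_neg one_lt_two (by linarith)
      linarith
    set K := 2 * Cv * (1 - (2:ℝ)^(-b))⁻¹ with hKdef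
    have hK : 0 < K := by positivity
    refine ⟨Cc * K * (1 - (2:ℝ)^(-b))⁻¹ + Cc * D^(γ/a) * (1 - (2:ℝ)^(-γ))⁻¹,
      by positivity, ?_⟩
    intro ε hε hεe
    have hε1 : ε ≤ 1 := hεfacts ε hε hεe
    have hε2 : ε ^ (-2:ℝ) = (ε^2)⁻¹ := by
      rw [show (-2:ℝ) = -((2:ℕ):ℝ) by norm_num, Real.rpow_neg hε.le,
        Real.rpow_natCast]
    have hε2pos : (0:ℝ) < ε ^ (-2:ℝ) := Real.rpow_pos_of_pos hε _
    set L := mlL a Cb ε with hLdef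
    set M : ℕ → ℝ := fun ℓ => K * ε^(-2:ℝ) * (2:ℝ)^(-(ℓ:ℝ)*((a+γ)/2)) with hMdef
    have hMpos : ∀ ℓ, 0 < M ℓ := fun ℓ => by
      rw [hMdef]; positivity
    refine ⟨L, fun ℓ => ⌈M ℓ⌉₊, fun ℓ _ => Nat.ceil_pos.mpr (hMpos ℓ), ?_, ?_, ?_, ?_⟩
    · -- variance
      rw [hgconv L]
      have hterm : ∀ ℓ ∈ Finset.range (L+1),
          Cv * ((2:ℝ) ^ (-(ℓ:ℝ))) ^ a / (⌈M ℓ⌉₊ : ℝ)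
            ≤ (Cv / K * ε^2) * (2:ℝ)^(-(ℓ:ℝ)*b) := by
        intro ℓ _
        rw [hgconv ℓ]
        have h1 : Cv * (2:ℝ)^(-(ℓ:ℝ)*a) / (⌈M ℓ⌉₊ : ℝ)
            ≤ Cv * (2:ℝ)^(-(ℓ:ℝ)*a) / M ℓ :=
          div_le_div_of_nonneg_left (by positivity) (hMpos ℓ) (Nat.le_ceil _)
        refine h1.trans_eq ?_
        rw [hMdef]
        have hsplit : (2:ℝ)^(-(ℓ:ℝ)*a)
            = (2:ℝ)^(-(ℓ:ℝ)*((a+γ)/2)) * (2:ℝ)^(-(ℓ:ℝ)*b) := by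
          rw [← Real.rpow_add (by norm_num : (0:ℝ) < 2)]
          congr 1; rw [hbdef]; ring
        rw [hsplit, hε2]
        have h2 : ((2:ℝ)^(-(ℓ:ℝ)*((a+γ)/2))) ≠ 0 :=
          (Real.rpow_pos_of_pos (by norm_num) _).ne'
        field_simp
      calc Cb * (2:ℝ)^(-(L:ℝ)*a)
            + ∑ ℓ ∈ Finset.range (L+1), Cv * ((2:ℝ) ^ (-(ℓ:ℝ))) ^ a / (⌈M ℓ⌉₊ : ℝ)
          ≤ ε^2/2 + ∑ ℓ ∈ Finset.range (L+1), (Cv / K * ε^2) * (2:ℝ)^(-(ℓ:ℝ)*b) :=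
            add_le_add (mlL_bias ha hCb hε) (Finset.sum_le_sum hterm)
        _ ≤ ε^2/2 + (Cv / K * ε^2) * (1 - (2:ℝ)^(-b))⁻¹ := by
            rw [← Finset.mul_sum]
            exact add_le_add_right (mul_le_mul_of_nonneg_left
              (sum_rpow_neg_le' hb (L+1)) (by positivity)) _
        _ = ε^2 := by rw [hKdef]; field_simp; ring
    · -- cost, case γ < 4s
      intro _
      have hterm : ∀ ℓ ∈ Finset.range (L+1),
          (⌈M ℓ⌉₊ : ℝ) * Cc * ((2:ℝ) ^ (-(ℓ:ℝ))) ^ (-γ)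
            ≤ Cc * K * ε^(-2:ℝ) * (2:ℝ)^(-(ℓ:ℝ)*b) + Cc * (2:ℝ)^((ℓ:ℝ)*γ) := by
        intro ℓ _
        rw [hcconv ℓ]
        have h1 : (⌈M ℓ⌉₊ : ℝ) ≤ M ℓ + 1 := (Nat.ceil_lt_add_one (hMpos ℓ).le).le
        have h2 : (0:ℝ) < Cc * (2:ℝ)^((ℓ:ℝ)*γ) := by positivity
        calc (⌈M ℓ⌉₊ : ℝ) * Cc * (2:ℝ)^((ℓ:ℝ)*γ)
            ≤ (M ℓ + 1) * Cc * (2:ℝ)^((ℓ:ℝ)*γ) := by nlinarith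
          _ = Cc * K * ε^(-2:ℝ) * (2:ℝ)^(-(ℓ:ℝ)*b) + Cc * (2:ℝ)^((ℓ:ℝ)*γ) := by
              rw [hMdef]
              have hsplit : (2:ℝ)^(-(ℓ:ℝ)*((a+γ)/2)) * (2:ℝ)^((ℓ:ℝ)*γ)
                  = (2:ℝ)^(-(ℓ:ℝ)*b) := by
                rw [← Real.rpow_add (by norm_num : (0:ℝ) < 2)]
                congr 1; rw [hbdef]; ring
              calc (K * ε^(-2:ℝ) * (2:ℝ)^(-(ℓ:ℝ)*((a+γ)/2)) + 1) * Cc * (2:ℝ)^((ℓ:ℝ)*γ)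
                  = Cc * K * ε^(-2:ℝ) * ((2:ℝ)^(-(ℓ:ℝ)*((a+γ)/2)) * (2:ℝ)^((ℓ:ℝ)*γ))
                    + Cc * (2:ℝ)^((ℓ:ℝ)*γ) := by ring
                _ = _ := by rw [hsplit]
      have hLγ : (2:ℝ)^((L:ℝ)*γ) ≤ D^(γ/a) * ε^(-2:ℝ) := by
        calc (2:ℝ)^((L:ℝ)*γ) ≤ D^(γ/a) * ε^(-(2*γ/a)) := by
              rw [hDdef]; exact mlL_rpow_le ha hCb hε hε1 hγ.le
          _ ≤ D^(γ/a) * ε^(-2:ℝ) := by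
              apply mul_le_mul_of_nonneg_left _ (Real.rpow_nonneg hD.le _)
              apply Real.rpow_le_rpow_of_exponent_ge hε hε1
              rw [neg_le_neg_iff, div_le_iff₀ ha]
              nlinarith
      calc ∑ ℓ ∈ Finset.range (L+1), (⌈M ℓ⌉₊ : ℝ) * Cc * ((2:ℝ) ^ (-(ℓ:ℝ))) ^ (-γ)
          ≤ ∑ ℓ ∈ Finset.range (L+1),
              (Cc * K * ε^(-2:ℝ) * (2:ℝ)^(-(ℓ:ℝ)*b) + Cc * (2:ℝ)^((ℓ:ℝ)*γ)) :=
            Finset.sum_le_sum hterm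
        _ = Cc * K * ε^(-2:ℝ) * (∑ ℓ ∈ Finset.range (L+1), (2:ℝ)^(-(ℓ:ℝ)*b))
            + Cc * (∑ ℓ ∈ Finset.range (L+1), (2:ℝ)^((ℓ:ℝ)*γ)) := by
            rw [Finset.sum_add_distrib, ← Finset.mul_sum, ← Finset.mul_sum]
        _ ≤ Cc * K * ε^(-2:ℝ) * (1 - (2:ℝ)^(-b))⁻¹
            + Cc * ((2:ℝ)^((L:ℝ)*γ) * (1 - (2:ℝ)^(-γ))⁻¹) := by
            apply add_le_add
            · exact mul_le_mul_of_nonneg_left (sum_rpow_neg_le' hb (L+1)) (by positivity)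
            · exact mul_le_mul_of_nonneg_left (sum_rpow_le' hγ L) hCc.le
        _ ≤ Cc * K * ε^(-2:ℝ) * (1 - (2:ℝ)^(-b))⁻¹
            + Cc * (D^(γ/a) * ε^(-2:ℝ) * (1 - (2:ℝ)^(-γ))⁻¹) := by
            apply add_le_add_right
            apply mul_le_mul_of_nonneg_left _ hCc.le
            exact mul_le_mul_of_nonneg_right hLγ (by positivity)
        _ = (Cc * K * (1 - (2:ℝ)^(-b))⁻¹ + Cc * D^(γ/a) * (1 - (2:ℝ)^(-γ))⁻¹)
            * ε^(-2:ℝ) := by ring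
    · intro h; exact absurd h (by linarith)
    · intro h; exact absurd h (by linarith)
  · -- γ = a = 4s : cost C ε^{-2} log²ε
    have hga : (0:ℝ) < 1 - (2:ℝ)^(-a) := by
      have : (2:ℝ)^(-a) < 1 :=
        Real.rpow_lt_one_of_one_lt_of_neg one_lt_two (by linarith)
      linarith
    set E := (|Real.log (2*Cb)| + 2) / (a * Real.log 2) + 2 with hEdef
    have hlog2 : (0:ℝ) < Real.log 2 := Real.log_pos one_lt_two
    have hE : 0 < E := by positivity
    refine ⟨2 * Cc * Cv * E^2 + Cc * D * (1 - (2:ℝ)^(-a))⁻¹, by positivity, ?_⟩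
    intro ε hε hεe
    have hε1 : ε ≤ 1 := hεfacts ε hε hεe
    have hε2 : ε ^ (-2:ℝ) = (ε^2)⁻¹ := by
      rw [show (-2:ℝ) = -((2:ℕ):ℝ) by norm_num, Real.rpow_neg hε.le,
        Real.rpow_natCast]
    have hε2pos : (0:ℝ) < ε ^ (-2:ℝ) := Real.rpow_pos_of_pos hε _
    have hlog1 : 1 < -Real.log ε := by
      have := Real.log_lt_log hε hεe
      rw [Real.log_exp] at this; linarith
    set L := mlL a Cb ε with hLdef
    have hL1 : (0:ℝ) < (L:ℝ) + 1 := by positivity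
    set M : ℕ → ℝ := fun ℓ =>
      2 * Cv * ((L:ℝ)+1) * ε^(-2:ℝ) * (2:ℝ)^(-(ℓ:ℝ)*a) with hMdef
    have hMpos : ∀ ℓ, 0 < M ℓ := fun ℓ => by rw [hMdef]; positivity
    refine ⟨L, fun ℓ => ⌈M ℓ⌉₊, fun ℓ _ => Nat.ceil_pos.mpr (hMpos ℓ), ?_, ?_, ?_, ?_⟩
    · -- variance
      rw [hgconv L]
      have hterm : ∀ ℓ ∈ Finset.range (L+1),
          Cv * ((2:ℝ) ^ (-(ℓ:ℝ))) ^ a / (⌈M ℓ⌉₊ : ℝ)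
            ≤ ε^2 / (2 * ((L:ℝ)+1)) := by
        intro ℓ _
        rw [hgconv ℓ]
        have h1 : Cv * (2:ℝ)^(-(ℓ:ℝ)*a) / (⌈M ℓ⌉₊ : ℝ)
            ≤ Cv * (2:ℝ)^(-(ℓ:ℝ)*a) / M ℓ :=
          div_le_div_of_nonneg_left (by positivity) (hMpos ℓ) (Nat.le_ceil _)
        refine h1.trans_eq ?_
        rw [hMdef, hε2]
        have h2 : ((2:ℝ)^(-(ℓ:ℝ)*a)) ≠ 0 :=
          (Real.rpow_pos_of_pos (by norm_num) _).ne'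
        field_simp
      calc Cb * (2:ℝ)^(-(L:ℝ)*a)
            + ∑ ℓ ∈ Finset.range (L+1), Cv * ((2:ℝ) ^ (-(ℓ:ℝ))) ^ a / (⌈M ℓ⌉₊ : ℝ)
          ≤ ε^2/2 + ∑ ℓ ∈ Finset.range (L+1), ε^2 / (2 * ((L:ℝ)+1)) :=
            add_le_add (mlL_bias ha hCb hε) (Finset.sum_le_sum hterm)
        _ = ε^2/2 + ((L:ℝ)+1) * (ε^2 / (2 * ((L:ℝ)+1))) := by
            rw [Finset.sum_const, Finset.card_range, nsmul_eq_mul]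
            push_cast; ring
        _ = ε^2 := by field_simp; ring
    · intro h; exact absurd h (by linarith)
    · -- cost, case 4s = γ
      intro _
      have hterm : ∀ ℓ ∈ Finset.range (L+1),
          (⌈M ℓ⌉₊ : ℝ) * Cc * ((2:ℝ) ^ (-(ℓ:ℝ))) ^ (-γ)
            ≤ 2 * Cc * Cv * ((L:ℝ)+1) * ε^(-2:ℝ) + Cc * (2:ℝ)^((ℓ:ℝ)*a) := by
        intro ℓ _
        rw [hcconv ℓ, hcase]
        have h1 : (⌈M ℓ⌉₊ : ℝ) ≤ M ℓ + 1 := (Nat.ceil_lt_add_one (hMpos ℓ).le).le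
        have h2 : (0:ℝ) < Cc * (2:ℝ)^((ℓ:ℝ)*a) := by positivity
        calc (⌈M ℓ⌉₊ : ℝ) * Cc * (2:ℝ)^((ℓ:ℝ)*a)
            ≤ (M ℓ + 1) * Cc * (2:ℝ)^((ℓ:ℝ)*a) := by nlinarith
          _ = 2 * Cc * Cv * ((L:ℝ)+1) * ε^(-2:ℝ) + Cc * (2:ℝ)^((ℓ:ℝ)*a) := by
              rw [hMdef]
              have hsplit : (2:ℝ)^(-(ℓ:ℝ)*a) * (2:ℝ)^((ℓ:ℝ)*a) = 1 := by
                rw [← Real.rpow_add (by norm_num : (0:ℝ) < 2)]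
                norm_num
              calc (2 * Cv * ((L:ℝ)+1) * ε^(-2:ℝ) * (2:ℝ)^(-(ℓ:ℝ)*a) + 1) * Cc
                    * (2:ℝ)^((ℓ:ℝ)*a)
                  = 2 * Cc * Cv * ((L:ℝ)+1) * ε^(-2:ℝ)
                      * ((2:ℝ)^(-(ℓ:ℝ)*a) * (2:ℝ)^((ℓ:ℝ)*a))
                    + Cc * (2:ℝ)^((ℓ:ℝ)*a) := by ring
                _ = _ := by rw [hsplit]; ring
      have hLsq : ((L:ℝ)+1)^2 ≤ E^2 * Real.log ε ^ 2 := by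
        have h1 : (L:ℝ)+1 ≤ E * (-Real.log ε) := by
          rw [hEdef, hLdef]; exact mlL_add_one_le ha hCb hε hεe
        calc ((L:ℝ)+1)^2 ≤ (E * (-Real.log ε))^2 := pow_le_pow_left₀ hL1.le h1 2
          _ = E^2 * Real.log ε ^ 2 := by ring
      have hlogsq : 1 ≤ Real.log ε ^ 2 := by
        have h2 : (1:ℝ) ≤ (-Real.log ε)^2 := one_le_pow₀ hlog1.le
        rwa [neg_sq] at h2
      have hLa : (2:ℝ)^((L:ℝ)*a) ≤ D * ε^(-2:ℝ) := by
        rw [hDdef, hLdef]; exact mlL_pow_le ha hCb hε hε1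
      calc ∑ ℓ ∈ Finset.range (L+1), (⌈M ℓ⌉₊ : ℝ) * Cc * ((2:ℝ) ^ (-(ℓ:ℝ))) ^ (-γ)
          ≤ ∑ ℓ ∈ Finset.range (L+1),
              (2 * Cc * Cv * ((L:ℝ)+1) * ε^(-2:ℝ) + Cc * (2:ℝ)^((ℓ:ℝ)*a)) :=
            Finset.sum_le_sum hterm
        _ = ((L:ℝ)+1) * (2 * Cc * Cv * ((L:ℝ)+1) * ε^(-2:ℝ))
            + Cc * (∑ ℓ ∈ Finset.range (L+1), (2:ℝ)^((ℓ:ℝ)*a)) := by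
            rw [Finset.sum_add_distrib, Finset.sum_const, Finset.card_range,
              nsmul_eq_mul, ← Finset.mul_sum]
            push_cast; ring
        _ ≤ 2 * Cc * Cv * ((L:ℝ)+1)^2 * ε^(-2:ℝ)
            + Cc * ((2:ℝ)^((L:ℝ)*a) * (1 - (2:ℝ)^(-a))⁻¹) := by
            apply add_le_add
            · apply le_of_eq; ring
            · exact mul_le_mul_of_nonneg_left (sum_rpow_le' ha L) hCc.le
        _ ≤ 2 * Cc * Cv * (E^2 * Real.log ε ^ 2) * ε^(-2:ℝ)
            + Cc * (D * ε^(-2:ℝ) * (1 - (2:ℝ)^(-a))⁻¹ * Real.log ε ^ 2) := by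
            apply add_le_add
            · apply mul_le_mul_of_nonneg_right _ hε2pos.le
              apply mul_le_mul_of_nonneg_left hLsq (by positivity)
            · apply mul_le_mul_of_nonneg_left _ hCc.le
              calc (2:ℝ)^((L:ℝ)*a) * (1 - (2:ℝ)^(-a))⁻¹
                  ≤ D * ε^(-2:ℝ) * (1 - (2:ℝ)^(-a))⁻¹ :=
                    mul_le_mul_of_nonneg_right hLa (by positivity)
                _ ≤ D * ε^(-2:ℝ) * (1 - (2:ℝ)^(-a))⁻¹ * Real.log ε ^ 2 :=
                    le_mul_of_one_le_right (by positivity) hlogsq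
        _ = (2 * Cc * Cv * E^2 + Cc * D * (1 - (2:ℝ)^(-a))⁻¹)
            * ε^(-2:ℝ) * Real.log ε ^ 2 := by ring
    · intro h; exact absurd h (by linarith)
  · -- a = 4s < γ : cost C ε^{-(γ/(2s))}
    set b := (γ - a)/2 with hbdef
    have hb : 0 < b := by rw [hbdef]; linarith
    have hgb : (0:ℝ) < 1 - (2:ℝ)^(-b) := by
      have : (2:ℝ)^(-b) < 1 :=
        Real.rpow_lt_one_of_one_lt_of_neg one_lt_two (by linarith)
      linarith
    have hgγ : (0:ℝ) < 1 - (2:ℝ)^(-γ) := by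
      have : (2:ℝ)^(-γ) < 1 :=
        Real.rpow_lt_one_of_one_lt_of_neg one_lt_two (by linarith)
      linarith
    set K := 2 * Cv * (1 - (2:ℝ)^(-b))⁻¹ with hKdef
    have hK : 0 < K := by positivity
    have hexp : (-2:ℝ) + -(2*(γ-a)/a) = -(γ/(2*s)) := by
      rw [hadef]; field_simp; ring
    have hexp2 : -(2*γ/a) = -(γ/(2*s)) := by
      rw [hadef]; field_simp; ring
    refine ⟨Cc * K * (1 - (2:ℝ)^(-b))⁻¹ * D^((γ-a)/a)
        + Cc * D^(γ/a) * (1 - (2:ℝ)^(-γ))⁻¹, by positivity, ?_⟩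
    intro ε hε hεe
    have hε1 : ε ≤ 1 := hεfacts ε hε hεe
    have hε2 : ε ^ (-2:ℝ) = (ε^2)⁻¹ := by
      rw [show (-2:ℝ) = -((2:ℕ):ℝ) by norm_num, Real.rpow_neg hε.le,
        Real.rpow_natCast]
    have hε2pos : (0:ℝ) < ε ^ (-2:ℝ) := Real.rpow_pos_of_pos hε _
    set L := mlL a Cb ε with hLdef
    set M : ℕ → ℝ := fun ℓ =>
      K * ε^(-2:ℝ) * (2:ℝ)^((L:ℝ)*b) * (2:ℝ)^(-(ℓ:ℝ)*((a+γ)/2)) with hMdef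
    have hMpos : ∀ ℓ, 0 < M ℓ := fun ℓ => by rw [hMdef]; positivity
    refine ⟨L, fun ℓ => ⌈M ℓ⌉₊, fun ℓ _ => Nat.ceil_pos.mpr (hMpos ℓ), ?_, ?_, ?_, ?_⟩
    · -- variance
      rw [hgconv L]
      have hterm : ∀ ℓ ∈ Finset.range (L+1),
          Cv * ((2:ℝ) ^ (-(ℓ:ℝ))) ^ a / (⌈M ℓ⌉₊ : ℝ)
            ≤ (Cv / K * ε^2 * (2:ℝ)^(-(L:ℝ)*b)) * (2:ℝ)^((ℓ:ℝ)*b) := by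
        intro ℓ _
        rw [hgconv ℓ]
        have h1 : Cv * (2:ℝ)^(-(ℓ:ℝ)*a) / (⌈M ℓ⌉₊ : ℝ)
            ≤ Cv * (2:ℝ)^(-(ℓ:ℝ)*a) / M ℓ :=
          div_le_div_of_nonneg_left (by positivity) (hMpos ℓ) (Nat.le_ceil _)
        refine h1.trans_eq ?_
        rw [hMdef]
        have hsplit : (2:ℝ)^(-(ℓ:ℝ)*a)
            = (2:ℝ)^(-(ℓ:ℝ)*((a+γ)/2)) * (2:ℝ)^((ℓ:ℝ)*b) := by
          rw [← Real.rpow_add (by norm_num : (0:ℝ) < 2)]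
          congr 1; rw [hbdef]; ring
        have hLb : (2:ℝ)^(-(L:ℝ)*b) = ((2:ℝ)^((L:ℝ)*b))⁻¹ := by
          rw [show -(L:ℝ)*b = -((L:ℝ)*b) by ring,
            Real.rpow_neg (by norm_num : (0:ℝ) ≤ 2)]
        rw [hsplit, hε2, hLb]
        have h2 : ((2:ℝ)^(-(ℓ:ℝ)*((a+γ)/2))) ≠ 0 :=
          (Real.rpow_pos_of_pos (by norm_num) _).ne'
        have h3 : ((2:ℝ)^((L:ℝ)*b)) ≠ 0 :=
          (Real.rpow_pos_of_pos (by norm_num) _).ne'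
        field_simp
      have hcancel : (2:ℝ)^(-(L:ℝ)*b) * (2:ℝ)^((L:ℝ)*b) = 1 := by
        rw [← Real.rpow_add (by norm_num : (0:ℝ) < 2)]; norm_num
      calc Cb * (2:ℝ)^(-(L:ℝ)*a)
            + ∑ ℓ ∈ Finset.range (L+1), Cv * ((2:ℝ) ^ (-(ℓ:ℝ))) ^ a / (⌈M ℓ⌉₊ : ℝ)
          ≤ ε^2/2 + ∑ ℓ ∈ Finset.range (L+1),
              (Cv / K * ε^2 * (2:ℝ)^(-(L:ℝ)*b)) * (2:ℝ)^((ℓ:ℝ)*b) :=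
            add_le_add (mlL_bias ha hCb hε) (Finset.sum_le_sum hterm)
        _ ≤ ε^2/2 + (Cv / K * ε^2 * (2:ℝ)^(-(L:ℝ)*b))
              * ((2:ℝ)^((L:ℝ)*b) * (1 - (2:ℝ)^(-b))⁻¹) := by
            rw [← Finset.mul_sum]
            exact add_le_add_right (mul_le_mul_of_nonneg_left
              (sum_rpow_le' hb L) (by positivity)) _
        _ = ε^2/2 + Cv / K * (1 - (2:ℝ)^(-b))⁻¹ * ε^2 := by
            rw [show (Cv / K * ε^2 * (2:ℝ)^(-(L:ℝ)*b))
                  * ((2:ℝ)^((L:ℝ)*b) * (1 - (2:ℝ)^(-b))⁻¹)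
                = Cv / K * (1 - (2:ℝ)^(-b))⁻¹ * ε^2
                  * ((2:ℝ)^(-(L:ℝ)*b) * (2:ℝ)^((L:ℝ)*b)) by ring, hcancel]
            ring
        _ = ε^2 := by rw [hKdef]; field_simp; ring
    · intro h; exact absurd h (by linarith)
    · intro h; exact absurd h (by linarith)
    · -- cost, case 4s < γ
      intro _
      have hterm : ∀ ℓ ∈ Finset.range (L+1),
          (⌈M ℓ⌉₊ : ℝ) * Cc * ((2:ℝ) ^ (-(ℓ:ℝ))) ^ (-γ)
            ≤ Cc * K * ε^(-2:ℝ) * (2:ℝ)^((L:ℝ)*b) * (2:ℝ)^((ℓ:ℝ)*b)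
              + Cc * (2:ℝ)^((ℓ:ℝ)*γ) := by
        intro ℓ _
        rw [hcconv ℓ]
        have h1 : (⌈M ℓ⌉₊ : ℝ) ≤ M ℓ + 1 := (Nat.ceil_lt_add_one (hMpos ℓ).le).le
        have h2 : (0:ℝ) < Cc * (2:ℝ)^((ℓ:ℝ)*γ) := by positivity
        calc (⌈M ℓ⌉₊ : ℝ) * Cc * (2:ℝ)^((ℓ:ℝ)*γ)
            ≤ (M ℓ + 1) * Cc * (2:ℝ)^((ℓ:ℝ)*γ) := by nlinarith
          _ = Cc * K * ε^(-2:ℝ) * (2:ℝ)^((L:ℝ)*b) * (2:ℝ)^((ℓ:ℝ)*b)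
              + Cc * (2:ℝ)^((ℓ:ℝ)*γ) := by
              rw [hMdef]
              have hsplit : (2:ℝ)^(-(ℓ:ℝ)*((a+γ)/2)) * (2:ℝ)^((ℓ:ℝ)*γ)
                  = (2:ℝ)^((ℓ:ℝ)*b) := by
                rw [← Real.rpow_add (by norm_num : (0:ℝ) < 2)]
                congr 1; rw [hbdef]; ring
              calc (K * ε^(-2:ℝ) * (2:ℝ)^((L:ℝ)*b) * (2:ℝ)^(-(ℓ:ℝ)*((a+γ)/2)) + 1)
                    * Cc * (2:ℝ)^((ℓ:ℝ)*γ)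
                  = Cc * K * ε^(-2:ℝ) * (2:ℝ)^((L:ℝ)*b)
                      * ((2:ℝ)^(-(ℓ:ℝ)*((a+γ)/2)) * (2:ℝ)^((ℓ:ℝ)*γ))
                    + Cc * (2:ℝ)^((ℓ:ℝ)*γ) := by ring
                _ = _ := by rw [hsplit]
      have h2Lb : (2:ℝ)^((L:ℝ)*b) * (2:ℝ)^((L:ℝ)*b)
          ≤ D^((γ-a)/a) * ε^(-(2*(γ-a)/a)) := by
        rw [← Real.rpow_add (by norm_num : (0:ℝ) < 2),
          show (L:ℝ)*b + (L:ℝ)*b = (L:ℝ)*(γ-a) by rw [hbdef]; ring, hDdef, hLdef]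
        exact mlL_rpow_le ha hCb hε hε1 (by linarith)
      have hLγ : (2:ℝ)^((L:ℝ)*γ) ≤ D^(γ/a) * ε^(-(γ/(2*s))) := by
        rw [← hexp2, hDdef, hLdef]
        exact mlL_rpow_le ha hCb hε hε1 hγ.le
      have hεmul : ε^(-2:ℝ) * ε^(-(2*(γ-a)/a)) = ε^(-(γ/(2*s))) := by
        rw [← Real.rpow_add hε, hexp]
      calc ∑ ℓ ∈ Finset.range (L+1), (⌈M ℓ⌉₊ : ℝ) * Cc * ((2:ℝ) ^ (-(ℓ:ℝ))) ^ (-γ)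
          ≤ ∑ ℓ ∈ Finset.range (L+1),
              (Cc * K * ε^(-2:ℝ) * (2:ℝ)^((L:ℝ)*b) * (2:ℝ)^((ℓ:ℝ)*b)
                + Cc * (2:ℝ)^((ℓ:ℝ)*γ)) :=
            Finset.sum_le_sum hterm
        _ = Cc * K * ε^(-2:ℝ) * (2:ℝ)^((L:ℝ)*b)
              * (∑ ℓ ∈ Finset.range (L+1), (2:ℝ)^((ℓ:ℝ)*b))
            + Cc * (∑ ℓ ∈ Finset.range (L+1), (2:ℝ)^((ℓ:ℝ)*γ)) := by
            rw [Finset.sum_add_distrib, ← Finset.mul_sum, ← Finset.mul_sum]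
        _ ≤ Cc * K * ε^(-2:ℝ) * (2:ℝ)^((L:ℝ)*b)
              * ((2:ℝ)^((L:ℝ)*b) * (1 - (2:ℝ)^(-b))⁻¹)
            + Cc * ((2:ℝ)^((L:ℝ)*γ) * (1 - (2:ℝ)^(-γ))⁻¹) := by
            apply add_le_add
            · exact mul_le_mul_of_nonneg_left (sum_rpow_le' hb L) (by positivity)
            · exact mul_le_mul_of_nonneg_left (sum_rpow_le' hγ L) hCc.le
        _ ≤ Cc * K * ε^(-2:ℝ) * (D^((γ-a)/a) * ε^(-(2*(γ-a)/a)))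
              * (1 - (2:ℝ)^(-b))⁻¹
            + Cc * (D^(γ/a) * ε^(-(γ/(2*s))) * (1 - (2:ℝ)^(-γ))⁻¹) := by
            apply add_le_add
            · rw [show Cc * K * ε^(-2:ℝ) * (2:ℝ)^((L:ℝ)*b)
                    * ((2:ℝ)^((L:ℝ)*b) * (1 - (2:ℝ)^(-b))⁻¹)
                  = Cc * K * ε^(-2:ℝ) * ((2:ℝ)^((L:ℝ)*b) * (2:ℝ)^((L:ℝ)*b))
                    * (1 - (2:ℝ)^(-b))⁻¹ by ring]
              apply mul_le_mul_of_nonneg_right _ (by positivity)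
              exact mul_le_mul_of_nonneg_left h2Lb (by positivity)
            · apply mul_le_mul_of_nonneg_left _ hCc.le
              exact mul_le_mul_of_nonneg_right hLγ (by positivity)
        _ = (Cc * K * (1 - (2:ℝ)^(-b))⁻¹ * D^((γ-a)/a)
              + Cc * D^(γ/a) * (1 - (2:ℝ)^(-γ))⁻¹) * ε^(-(γ/(2*s))) := by
            rw [show Cc * K * ε^(-2:ℝ) * (D^((γ-a)/a) * ε^(-(2*(γ-a)/a)))
                  * (1 - (2:ℝ)^(-b))⁻¹
                = Cc * K * (1 - (2:ℝ)^(-b))⁻¹ * D^((γ-a)/a)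
                  * (ε^(-2:ℝ) * ε^(-(2*(γ-a)/a))) by ring, hεmul]
            ring
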